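/- arXiv:1203.5997 — 2 statements merged into one kernel-verified Lean document; each statement's English description precedes it below -/
import Mathlib

section
/- Let H be a complex Hilbert space, S : H → H a bounded, injective, positive self-adjoint operator with dense range, and K : H → H bounded such that S K = K* S. If A : H → H is a bounded operator satisfying A √S = √S K, then A is self-adjoint. -/
open scoped InnerProductSpace

/-- If `S` is a bounded, injective, positive self-adjoint operator with dense
range on a complex Hilbert space, `K` is bounded with `S K = K* S`, `T` is the positive square
root of `S`, and `A` is a bounded operator with `A T = T K`, then `A` is self-adjoint. -/
theorem stmt0 {H : Type*} [NormedAddCommGroup H] [InnerProductSpace ℂ H] [CompleteSpace H]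
    (S K T A : H →L[ℂ] H)
    (hS_pos : S.IsPositive) (hS_inj : Function.Injective S) (hS_dense : DenseRange S)
    (hSK : S ∘L K = ContinuousLinearMap.adjoint K ∘L S)
    (hT_pos : T.IsPositive) (hT_sq : T ∘L T = S)
    (hA : A ∘L T = T ∘L K) :
    IsSelfAdjoint A := by
  have hTsa : ContinuousLinearMap.adjoint T = T := hT_pos.isSelfAdjoint
  -- T is injective
  have hT_inj : Function.Injective T := by
    intro x y hxy
    apply hS_inj
    have : (T ∘L T) x = (T ∘L T) y := by simp [ContinuousLinearMap.comp_apply, hxy]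
    simpa [hT_sq] using this
  -- T has dense range
  have hT_dense : DenseRange T := by
    have hsub : Set.range S ⊆ Set.range T := by
      rintro _ ⟨x, rfl⟩
      exact ⟨T x, by rw [← hT_sq]; rfl⟩
    have : Dense (Set.range S) := hS_dense
    exact fun x => closure_mono hsub (this x)
  -- adjoint of hA : T ∘L A† = K† ∘L T
  have hA' : T ∘L ContinuousLinearMap.adjoint A
      = ContinuousLinearMap.adjoint K ∘L T := by
    have := congrArg ContinuousLinearMap.adjoint hA
    rwa [ContinuousLinearMap.adjoint_comp, ContinuousLinearMap.adjoint_comp, hTsa] at this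
  -- key: T ∘L (A† ∘L T) = T ∘L (A ∘L T)
  have hkey : T ∘L (ContinuousLinearMap.adjoint A ∘L T) = T ∘L (A ∘L T) := by
    calc T ∘L (ContinuousLinearMap.adjoint A ∘L T)
        = (T ∘L ContinuousLinearMap.adjoint A) ∘L T := by rw [ContinuousLinearMap.comp_assoc]
      _ = ContinuousLinearMap.adjoint K ∘L S := by rw [hA', ← hT_sq, ContinuousLinearMap.comp_assoc]
      _ = S ∘L K := hSK.symm
      _ = T ∘L (T ∘L K) := by rw [← hT_sq, ContinuousLinearMap.comp_assoc]
      _ = T ∘L (A ∘L T) := by rw [← hA]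
  have heq : ContinuousLinearMap.adjoint A ∘L T = A ∘L T := by
    ext x
    have := congrArg (fun f => f x) hkey
    exact hT_inj this
  have hfinal : ContinuousLinearMap.adjoint A = A := by
    ext x
    have := hT_dense.equalizer (ContinuousLinearMap.adjoint A).continuous A.continuous
      (by ext y; exact congrArg (fun f => f y) heq)
    exact congrFun this x
  rwa [ContinuousLinearMap.isSelfAdjoint_iff']
end

section
/- Let A be a bounded self-adjoint operator on a complex Hilbert space H, h ∈ H, and let μ(R) = ⟨E(R)h, h⟩ be the associated scalar spectral measure. Fix x ∈ ℝ. If there exists a sequence εₙ → 0⁺ such that the vectors τₙ = (A - x - iεₙ)⁻¹ h converge weakly in H to some τ, then (A - x) τ = h and ∫ 1/(t-x)² dμ(t) < ∞. -/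
open scoped InnerProductSpace
open MeasureTheory Filter Topology
open scoped ENNReal NNReal

/-- A projection-valued spectral measure for the bounded self-adjoint operator `A` on a complex
Hilbert space: a family of commuting orthogonal projections, multiplicative and countably
additive in the strong topology, with `E(univ) = I`, compactly supported, commuting with `A`,
and whose diagonal scalar measures have moments reproducing those of `A`. -/
structure IsSpectralMeasure {H : Type*} [NormedAddCommGroup H] [InnerProductSpace ℂ H]
    [CompleteSpace H] (A : H →L[ℂ] H) (E : Set ℝ → H →L[ℂ] H) : Prop where
  selfAdjoint : ∀ R : Set ℝ, IsSelfAdjoint (E R)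
  idem : ∀ R : Set ℝ, E R ∘L E R = E R
  univ : E Set.univ = 1
  inter : ∀ R₁ R₂ : Set ℝ, E R₁ ∘L E R₂ = E (R₁ ∩ R₂)
  commutes : ∀ R : Set ℝ, A ∘L E R = E R ∘L A
  countablyAdditive : ∀ f : ℕ → Set ℝ, (∀ n, MeasurableSet (f n)) →
    Pairwise (Function.onFun Disjoint f) → ∀ v : H,
      HasSum (fun n => E (f n) v) (E (⋃ n, f n) v)
  compactSupport : ∃ s : Set ℝ, IsCompact s ∧ E sᶜ = 0
  moment : ∀ v : H, ∀ μ : MeasureTheory.Measure ℝ,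
      (∀ R : Set ℝ, MeasurableSet R → ((μ R).toReal : ℂ) = ⟪v, E R v⟫_ℂ) →
      ∀ n : ℕ, ⟪v, (A ^ n) v⟫_ℂ = ∫ t : ℝ, (t : ℂ) ^ n ∂μ

section AuxStmt5

variable {H : Type*} [NormedAddCommGroup H] [InnerProductSpace ℂ H] [CompleteSpace H]
  {A : H →L[ℂ] H} {E : Set ℝ → H →L[ℂ] H}

lemma diag_eq (hE : IsSpectralMeasure A E) (τ : H) (R : Set ℝ) :
    ⟪τ, E R τ⟫_ℂ = ((‖E R τ‖^2 : ℝ) : ℂ) := by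
  have h1 : E R τ = E R (E R τ) := by
    conv_lhs => rw [← hE.idem R]
    rfl
  calc ⟪τ, E R τ⟫_ℂ = ⟪τ, E R (E R τ)⟫_ℂ := by rw [← h1]
    _ = ⟪E R τ, E R τ⟫_ℂ := ((hE.selfAdjoint R).isSymmetric τ (E R τ)).symm
    _ = ((‖E R τ‖^2 : ℝ) : ℂ) := by
        rw [inner_self_eq_norm_sq_to_K]; norm_num

lemma E_empty (hE : IsSpectralMeasure A E) : E ∅ = 0 := by
  ext v
  have h := hE.countablyAdditive (fun _ => ∅) (fun _ => MeasurableSet.empty)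
    (fun i j _ => by simp [Function.onFun]) v
  simp only [Set.iUnion_empty] at h
  have h2 := h.summable.tendsto_atTop_zero
  have := tendsto_nhds_unique tendsto_const_nhds h2
  simpa using this

lemma exists_diag_measure (hE : IsSpectralMeasure A E) (τ : H) :
    ∃ ν : Measure ℝ, IsFiniteMeasure ν ∧
      ∀ R : Set ℝ, MeasurableSet R → ν R = ENNReal.ofReal (‖E R τ‖^2) := by
  refine ⟨Measure.ofMeasurable (fun R _ => ENNReal.ofReal (‖E R τ‖^2)) ?_ ?_, ?_, ?_⟩
  · simp [E_empty hE]
  · intro f hmeas hdisj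
    have hsum : HasSum (fun n => E (f n) τ) (E (⋃ n, f n) τ) :=
      hE.countablyAdditive f hmeas hdisj τ
    have hsumC : HasSum (fun n => ⟪τ, E (f n) τ⟫_ℂ) ⟪τ, E (⋃ n, f n) τ⟫_ℂ :=
      (innerSL ℂ τ).hasSum hsum
    have hsumR : HasSum (fun n => ‖E (f n) τ‖^2) (‖E (⋃ n, f n) τ‖^2) := by
      have := Complex.reCLM.hasSum hsumC
      simp only [diag_eq hE τ] at this
      simpa [← Complex.ofReal_pow] using this
    rw [← hsumR.tsum_eq]
    exact ENNReal.ofReal_tsum_of_nonneg (fun n => sq_nonneg _) hsumR.summable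
  · constructor
    rw [Measure.ofMeasurable_apply _ MeasurableSet.univ]
    exact ENNReal.ofReal_lt_top
  · intro R hR
    exact Measure.ofMeasurable_apply R hR

lemma restrict_match (hE : IsSpectralMeasure A E) (τ : H) (ν : Measure ℝ)
    (hν : ∀ R : Set ℝ, MeasurableSet R → ν R = ENNReal.ofReal (‖E R τ‖^2))
    (R : Set ℝ) (hR : MeasurableSet R) :
    ∀ S : Set ℝ, MeasurableSet S →
      (((ν.restrict R) S).toReal : ℂ) = ⟪E R τ, E S (E R τ)⟫_ℂ := by
  intro S hS
  have h1 : (ν.restrict R) S = ν (S ∩ R) := Measure.restrict_apply hS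
  have h2 : ν (S ∩ R) = ENNReal.ofReal (‖E (S ∩ R) τ‖^2) := hν _ (hS.inter hR)
  have h3 : ⟪E R τ, E S (E R τ)⟫_ℂ = ⟪τ, E (S ∩ R) τ⟫_ℂ := by
    have e1 : E S (E R τ) = E (S ∩ R) τ := by
      have := congrArg (fun T => T τ) (hE.inter S R); simpa using this
    have e2 : E R (E (S ∩ R) τ) = E (R ∩ (S ∩ R)) τ := by
      have := congrArg (fun T => T τ) (hE.inter R (S ∩ R)); simpa using this
    have e3 : R ∩ (S ∩ R) = S ∩ R := by ext t; simp only [Set.mem_inter_iff]; tauto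
    have e4 := (hE.selfAdjoint R).isSymmetric τ (E (S ∩ R) τ)
    simp only [ContinuousLinearMap.coe_coe] at e4
    rw [e1, e4, e2, e3]
  rw [h1, h2, h3, diag_eq hE τ, ENNReal.toReal_ofReal (sq_nonneg _)]

lemma pow_integrable (hE : IsSpectralMeasure A E) (τ : H) (ν : Measure ℝ)
    [IsFiniteMeasure ν]
    (hν : ∀ R : Set ℝ, MeasurableSet R → ν R = ENNReal.ofReal (‖E R τ‖^2))
    (R : Set ℝ) (hR : MeasurableSet R) (n : ℕ) :
    Integrable (fun t : ℝ => (t : ℂ)^n) (ν.restrict R) := by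
  obtain ⟨s, hs, hsE⟩ := hE.compactSupport
  obtain ⟨C, hC⟩ := hs.isBounded.exists_norm_le
  have hnull : (ν.restrict R) sᶜ = 0 := by
    have h0 : ν sᶜ = 0 := by
      rw [hν _ hs.isClosed.measurableSet.compl, hsE]
      simp
    exact le_antisymm (le_trans (Measure.restrict_le_self _) h0.le) zero_le
  have hae : ∀ᵐ t ∂(ν.restrict R), t ∈ s := by
    have hc : {t : ℝ | ¬ t ∈ s} = sᶜ := rfl
    rw [ae_iff, hc]
    exact hnull
  refine (integrable_const ((max C 0)^n)).mono'
    ((Complex.continuous_ofReal.pow n).aestronglyMeasurable) ?_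
  filter_upwards [hae] with t ht
  have : |t| ≤ max C 0 := le_trans (hC t ht) (le_max_left _ _)
  calc ‖(t:ℂ)^n‖ = |t|^n := by
        rw [norm_pow, Complex.norm_real, Real.norm_eq_abs]
    _ ≤ (max C 0)^n := pow_le_pow_left₀ (abs_nonneg t) this n

lemma key_identity (hA : IsSelfAdjoint A) (hE : IsSpectralMeasure A E) (τ : H)
    (ν : Measure ℝ) [IsFiniteMeasure ν]
    (hν : ∀ R : Set ℝ, MeasurableSet R → ν R = ENNReal.ofReal (‖E R τ‖^2))
    (x : ℝ) (R : Set ℝ) (hR : MeasurableSet R) :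
    ((‖E R ((A - (x:ℂ) • (1 : H →L[ℂ] H)) τ)‖^2 : ℝ) : ℂ)
      = ∫ t, ((t:ℂ) - (x:ℂ))^2 ∂(ν.restrict R) := by
  set B : H →L[ℂ] H := A - (x:ℂ) • (1 : H →L[ℂ] H) with hB
  have hBsa : IsSelfAdjoint B := by
    refine hA.sub ?_
    rw [IsSelfAdjoint]
    simp [star_smul, Complex.star_def, Complex.conj_ofReal]
  set v : H := E R τ with hv
  -- commutation : E R (B τ) = B v
  have hcomm : E R (B τ) = B v := by
    have h1 : E R (A τ) = A (E R τ) := by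
      have := congrArg (fun T => T τ) (hE.commutes R)
      simpa using this.symm
    simp [hB, map_sub, h1, hv]
  -- moments
  have hmatch := restrict_match hE τ ν hν R hR
  have hmom := hE.moment v (ν.restrict R) hmatch
  -- expansion of B^2 applied
  have hexp : (B^2) v = (A^2) v - ((2*x:ℝ):ℂ) • (A v) + ((x^2:ℝ):ℂ) • v := by
    have : B^2 = A^2 - ((2*x:ℝ):ℂ) • A + ((x^2:ℝ):ℂ) • (1 : H →L[ℂ] H) := by
      simp only [hB, sq, mul_sub, sub_mul, smul_mul_assoc, mul_smul_comm, one_mul, mul_one,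
        smul_smul, smul_sub, smul_add]
      push_cast
      try module
    rw [this]; try rfl
  -- LHS = ⟪v, B^2 v⟫
  have hL : ((‖E R (B τ)‖^2 : ℝ) : ℂ) = ⟪v, (B^2) v⟫_ℂ := by
    have hnorm : ((‖B v‖^2 : ℝ) : ℂ) = ⟪B v, B v⟫_ℂ := by
      rw [inner_self_eq_norm_sq_to_K]; norm_num
    have hsym : ⟪B v, B v⟫_ℂ = ⟪v, (B^2) v⟫_ℂ := hBsa.isSymmetric v (B v)
    rw [hcomm]; exact hnorm.trans hsym
  have hI : ∀ n : ℕ, Integrable (fun t : ℝ => (t:ℂ)^n) (ν.restrict R) :=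
    pow_integrable hE τ ν hν R hR
  have hRHS : ∫ t, ((t:ℂ) - (x:ℂ))^2 ∂(ν.restrict R)
      = (∫ t, (t:ℂ)^2 ∂(ν.restrict R)) - ((2*x:ℝ):ℂ) * (∫ t, (t:ℂ)^1 ∂(ν.restrict R))
        + ((x^2:ℝ):ℂ) * (∫ t, (t:ℂ)^0 ∂(ν.restrict R)) := by
    have heq : (fun t : ℝ => ((t:ℂ) - (x:ℂ))^2)
        = fun t : ℝ => ((t:ℂ)^2 - ((2*x:ℝ):ℂ) * (t:ℂ)^1) + ((x^2:ℝ):ℂ) * (t:ℂ)^0 := by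
      funext t; push_cast; ring
    have i1 : ∫ t, (((t:ℂ)^2 - ((2*x:ℝ):ℂ) * (t:ℂ)^1) + ((x^2:ℝ):ℂ) * (t:ℂ)^0) ∂(ν.restrict R)
        = (∫ t, ((t:ℂ)^2 - ((2*x:ℝ):ℂ) * (t:ℂ)^1) ∂(ν.restrict R))
          + ∫ t, ((x^2:ℝ):ℂ) * (t:ℂ)^0 ∂(ν.restrict R) :=
      integral_add ((hI 2).sub ((hI 1).const_mul _)) ((hI 0).const_mul _)
    have i2 : ∫ t, ((t:ℂ)^2 - ((2*x:ℝ):ℂ) * (t:ℂ)^1) ∂(ν.restrict R)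
        = (∫ t, (t:ℂ)^2 ∂(ν.restrict R)) - ∫ t, ((2*x:ℝ):ℂ) * (t:ℂ)^1 ∂(ν.restrict R) :=
      integral_sub (hI 2) ((hI 1).const_mul _)
    have i3 : ∫ t, ((2*x:ℝ):ℂ) * (t:ℂ)^1 ∂(ν.restrict R)
        = ((2*x:ℝ):ℂ) * ∫ t, (t:ℂ)^1 ∂(ν.restrict R) := integral_const_mul _ _
    have i4 : ∫ t, ((x^2:ℝ):ℂ) * (t:ℂ)^0 ∂(ν.restrict R)
        = ((x^2:ℝ):ℂ) * ∫ t, (t:ℂ)^0 ∂(ν.restrict R) := integral_const_mul _ _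
    rw [heq, i1, i2, i3, i4]
  have hLHS : ⟪v, (B^2) v⟫_ℂ
      = ⟪v, (A^2) v⟫_ℂ - ((2*x:ℝ):ℂ) * ⟪v, A v⟫_ℂ + ((x^2:ℝ):ℂ) * ⟪v, v⟫_ℂ := by
    rw [hexp]
    simp [inner_add_right, inner_sub_right, inner_smul_right]
  have h1 := hmom 1
  rw [pow_one] at h1
  have h0 := hmom 0
  simp only [pow_zero, ContinuousLinearMap.one_apply] at h0
  rw [hL, hLHS, hmom 2, h1, h0, hRHS]
  norm_num

lemma cont_integrable (hE : IsSpectralMeasure A E) (τ : H) (ν : Measure ℝ)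
    [IsFiniteMeasure ν]
    (hν : ∀ R : Set ℝ, MeasurableSet R → ν R = ENNReal.ofReal (‖E R τ‖^2))
    (R : Set ℝ) (g : ℝ → ℝ) (hg : Continuous g) :
    Integrable g (ν.restrict R) := by
  obtain ⟨s, hs, hsE⟩ := hE.compactSupport
  obtain ⟨C, hC⟩ := hs.exists_bound_of_continuousOn hg.continuousOn
  have hnull : (ν.restrict R) sᶜ = 0 := by
    have h0 : ν sᶜ = 0 := by
      rw [hν _ hs.isClosed.measurableSet.compl, hsE]; simp
    exact le_antisymm (le_trans (Measure.restrict_le_self _) h0.le) zero_le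
  have hae : ∀ᵐ t ∂(ν.restrict R), t ∈ s := by
    have hc : {t : ℝ | ¬ t ∈ s} = sᶜ := rfl
    rw [ae_iff, hc]; exact hnull
  refine (integrable_const C).mono' hg.aestronglyMeasurable ?_
  filter_upwards [hae] with t ht
  exact hC t ht

lemma mu_eq_withDensity {h : H} (hA : IsSelfAdjoint A) (hE : IsSpectralMeasure A E)
    (τ : H) (x : ℝ) (hh : (A - (x:ℂ) • (1 : H →L[ℂ] H)) τ = h)
    (ν : Measure ℝ) [IsFiniteMeasure ν]
    (hν : ∀ R : Set ℝ, MeasurableSet R → ν R = ENNReal.ofReal (‖E R τ‖^2))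
    (μ : Measure ℝ) [IsFiniteMeasure μ]
    (hμ : ∀ R : Set ℝ, MeasurableSet R → ((μ R).toReal : ℂ) = ⟪h, E R h⟫_ℂ) :
    μ = ν.withDensity (fun t => ENNReal.ofReal ((t - x)^2)) := by
  ext R hR
  -- real identity
  have hreal : (μ R).toReal = ∫ t, (t - x)^2 ∂(ν.restrict R) := by
    have h1 : ((μ R).toReal : ℂ) = ((‖E R h‖^2 : ℝ) : ℂ) := by
      rw [hμ R hR, diag_eq hE h R]
    have h2 := key_identity hA hE τ ν hν x R hR
    rw [hh] at h2
    have h3 : ∫ t, ((t:ℂ) - (x:ℂ))^2 ∂(ν.restrict R)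
        = ((∫ t, (t - x)^2 ∂(ν.restrict R) : ℝ) : ℂ) := by
      have hco : ∀ t : ℝ, ((t:ℂ) - (x:ℂ))^2 = (((t - x)^2 : ℝ) : ℂ) := by
        intro t; push_cast; ring
      simp only [hco]
      exact integral_ofReal
    have := h1.trans (h2.trans h3)
    exact_mod_cast this
  have hint : Integrable (fun t => (t - x)^2) (ν.restrict R) :=
    cont_integrable hE τ ν hν R _ (by continuity)
  rw [withDensity_apply _ hR]
  have h4 : ∫⁻ t in R, ENNReal.ofReal ((t - x)^2) ∂ν
      = ENNReal.ofReal (∫ t, (t - x)^2 ∂(ν.restrict R)) :=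
    (ofReal_integral_eq_lintegral_ofReal hint
      (Filter.Eventually.of_forall fun t => sq_nonneg _)).symm
  rw [h4, ← hreal, ENNReal.ofReal_toReal (measure_ne_top μ R)]

lemma final_integrable {h : H} (hA : IsSelfAdjoint A) (hE : IsSpectralMeasure A E)
    (τ : H) (x : ℝ) (hh : (A - (x:ℂ) • (1 : H →L[ℂ] H)) τ = h)
    (μ : Measure ℝ) [IsFiniteMeasure μ]
    (hμ : ∀ R : Set ℝ, MeasurableSet R → ((μ R).toReal : ℂ) = ⟪h, E R h⟫_ℂ) :
    Integrable (fun t : ℝ => ((t - x) ^ 2)⁻¹) μ := by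
  obtain ⟨ν, hfin, hν⟩ := exists_diag_measure hE τ
  haveI := hfin
  have hμν := mu_eq_withDensity hA hE τ x hh ν hν μ hμ
  have hmeas : Measurable (fun t : ℝ => ((t - x) ^ 2)⁻¹) :=
    ((measurable_id.sub_const x).pow_const 2).inv
  refine ⟨hmeas.aestronglyMeasurable, ?_⟩
  rw [HasFiniteIntegral, hμν]
  have hw : Measurable (fun t : ℝ => ENNReal.ofReal ((t - x)^2)) :=
    ((measurable_id.sub_const x).pow_const 2).ennreal_ofReal
  rw [lintegral_withDensity_eq_lintegral_mul ν hw (hmeas.enorm)]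
  have hb : ∀ t : ℝ, ENNReal.ofReal ((t - x)^2)
      * ‖((t - x) ^ 2)⁻¹‖ₑ ≤ 1 := by
    intro t
    set a : ℝ := (t - x)^2 with ha
    have ha0 : 0 ≤ a := sq_nonneg _
    have h5 : ‖a⁻¹‖ₑ = ENNReal.ofReal a⁻¹ :=
      Real.enorm_eq_ofReal (inv_nonneg.2 ha0)
    rw [h5, ← ENNReal.ofReal_mul ha0]
    calc ENNReal.ofReal (a * a⁻¹) ≤ ENNReal.ofReal 1 := by
          apply ENNReal.ofReal_le_ofReal
          rcases eq_or_ne a 0 with h | h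
          · simp [h]
          · rw [mul_inv_cancel₀ h]
      _ = 1 := ENNReal.ofReal_one
  refine lt_of_le_of_lt (lintegral_mono (g := fun _ => (1:ℝ≥0∞)) (fun t => hb t)) ?_
  rw [lintegral_one]
  exact measure_lt_top ν _

end AuxStmt5

/-- Let `A` be bounded self-adjoint, `h ∈ H`, and `μ(R) = ⟨E(R)h,h⟩` its scalar
spectral measure. If for some sequence `εₙ → 0⁺` the vectors `τₙ = (A - x - iεₙ)⁻¹ h` converge
weakly to `τ`, then `(A - x)τ = h` and `∫ 1/(t-x)² dμ(t) < ∞`. -/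
theorem stmt5 {H : Type*} [NormedAddCommGroup H] [InnerProductSpace ℂ H] [CompleteSpace H]
    (A : H →L[ℂ] H) (hA : IsSelfAdjoint A)
    (E : Set ℝ → H →L[ℂ] H) (hE : IsSpectralMeasure A E) (h : H)
    (μ : Measure ℝ) [IsFiniteMeasure μ]
    (hμ : ∀ R : Set ℝ, MeasurableSet R → ((μ R).toReal : ℂ) = ⟪h, E R h⟫_ℂ)
    (x : ℝ) (ε : ℕ → ℝ) (hεpos : ∀ n, 0 < ε n)
    (hε : Tendsto ε atTop (𝓝 0)) (τ : H)
    (hτ : ∀ w : H, Tendsto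
        (fun n => ⟪w, Ring.inverse (A - (((x : ℂ) + (ε n : ℂ) * Complex.I)) •
            (1 : H →L[ℂ] H)) h⟫_ℂ)
        atTop (𝓝 ⟪w, τ⟫_ℂ)) :
    (A - (x : ℂ) • (1 : H →L[ℂ] H)) τ = h ∧
      Integrable (fun t : ℝ => ((t - x) ^ 2)⁻¹) μ := by
  have hpart1 : (A - (x : ℂ) • (1 : H →L[ℂ] H)) τ = h := by
    set z : ℕ → ℂ := fun n => (x : ℂ) + (ε n : ℂ) * Complex.I with hzdef
    set u : ℕ → H := fun n => Ring.inverse (A - z n • (1 : H →L[ℂ] H)) h with hudef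
    have hunit : ∀ n, IsUnit (A - z n • (1 : H →L[ℂ] H)) := by
      intro n
      have hz : (z n).im ≠ 0 := by simp [hzdef]; exact (hεpos n).ne'
      have h1 : z n ∉ spectrum ℂ A := fun hm => hz (hA.im_eq_zero_of_mem_spectrum hm)
      rw [spectrum.notMem_iff, Algebra.algebraMap_eq_smul_one] at h1
      have := h1.neg
      rwa [neg_sub] at this
    have happ : ∀ n, (A - z n • (1 : H →L[ℂ] H)) (u n) = h := by
      intro n
      have := Ring.mul_inverse_cancel _ (hunit n)
      calc (A - z n • (1 : H →L[ℂ] H)) (u n)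
          = ((A - z n • (1 : H →L[ℂ] H)) * Ring.inverse (A - z n • (1 : H →L[ℂ] H))) h := rfl
        _ = h := by rw [this]; rfl
    -- weak limit identity
    have key : ∀ w : H, ⟪w, h⟫_ℂ = ⟪w, (A - (x : ℂ) • (1 : H →L[ℂ] H)) τ⟫_ℂ := by
      intro w
      have hform : ∀ n, ⟪w, h⟫_ℂ = ⟪A w, u n⟫_ℂ - z n * ⟪w, u n⟫_ℂ := by
        intro n
        rw [← happ n]
        simp only [ContinuousLinearMap.sub_apply, ContinuousLinearMap.smul_apply,
          ContinuousLinearMap.one_apply, inner_sub_right, inner_smul_right]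
        have := hA.isSymmetric w (u n)
        rw [sub_left_inj]; exact this.symm
    -- limits
      have hz : Tendsto z atTop (𝓝 (x : ℂ)) := by
        have : Tendsto (fun n => ((ε n : ℂ))) atTop (𝓝 0) := by
          have := hε
          exact Complex.ofReal_zero ▸ ((Complex.continuous_ofReal.tendsto 0).comp this)
        simpa using (tendsto_const_nhds.add (this.mul tendsto_const_nhds))
      have hlim : Tendsto (fun n => ⟪A w, u n⟫_ℂ - z n * ⟪w, u n⟫_ℂ) atTop
          (𝓝 (⟪A w, τ⟫_ℂ - (x : ℂ) * ⟪w, τ⟫_ℂ)) :=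
        (hτ (A w)).sub (hz.mul (hτ w))
      have : ⟪w, h⟫_ℂ = ⟪A w, τ⟫_ℂ - (x : ℂ) * ⟪w, τ⟫_ℂ := by
        have hconst : Tendsto (fun _ : ℕ => ⟪w, h⟫_ℂ) atTop (𝓝 (⟪A w, τ⟫_ℂ - (x : ℂ) * ⟪w, τ⟫_ℂ)) := by
          simpa only [← hform] using hlim
        exact tendsto_nhds_unique tendsto_const_nhds hconst
      rw [this]
      simp only [ContinuousLinearMap.sub_apply, ContinuousLinearMap.smul_apply,
        ContinuousLinearMap.one_apply, inner_sub_right, inner_smul_right]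
      rw [sub_left_inj]; exact hA.isSymmetric w τ
    exact ext_inner_left ℂ (fun w => (key w).symm)
  exact ⟨hpart1, final_integrable hA hE τ x hpart1 μ hμ⟩
end
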